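/- arXiv:1906.04688 — 4 statements merged into one kernel-verified Lean document; each statement's English description precedes it below -/
import Mathlib

section
/- Let z̄_1,…,z̄_n be unit vectors in ℝ^d such that |⟨z̄_i, z̄_j⟩| < 1 for all i ≠ j, and let γ > 0. Then the sets W_1,…,W_n are pairwise disjoint: W_i ∩ W_j = ∅ whenever i ≠ j. -/
open RealInnerProductSpace

/-- The set `W_i = {w : |⟨w, z̄_i⟩| ≤ γ, and |⟨w − ⟨w, z̄_i⟩ z̄_i, z̄_j⟩| ≥ 2γ for all j ≠ i}`. -/
def sepSet {d n : ℕ} (zbar : Fin n → EuclideanSpace ℝ (Fin d)) (γ : ℝ) (i : Fin n) :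
    Set (EuclideanSpace ℝ (Fin d)) :=
  {w | |⟪w, zbar i⟫| ≤ γ ∧ ∀ j, j ≠ i → 2 * γ ≤ |⟪w - ⟪w, zbar i⟫ • zbar i, zbar j⟫|}

/-- If `z̄_1, …, z̄_n` are unit vectors with `|⟨z̄_i, z̄_j⟩| < 1` for `i ≠ j` and `γ > 0`,
then the sets `W_i` are pairwise disjoint. -/
theorem sepSet_pairwise_disjoint {d n : ℕ} (zbar : Fin n → EuclideanSpace ℝ (Fin d))
    (hunit : ∀ i, ‖zbar i‖ = 1)
    (hangle : ∀ i j, i ≠ j → |⟪zbar i, zbar j⟫| < 1)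
    (γ : ℝ) (hγ : 0 < γ) :
    ∀ i j, i ≠ j → sepSet zbar γ i ∩ sepSet zbar γ j = ∅ := by
  intro i j hij
  ext w
  simp only [Set.mem_inter_iff, Set.mem_empty_iff_false, iff_false, sepSet, Set.mem_setOf_eq]
  rintro ⟨⟨hi1, hi2⟩, hj1, _⟩
  have h2 := hi2 j (Ne.symm hij)
  rw [inner_sub_left, real_inner_smul_left] at h2
  have hc := hangle i j hij
  have : |⟪w, zbar j⟫ - ⟪w, zbar i⟫ * ⟪zbar i, zbar j⟫| < 2 * γ := by
    calc |⟪w, zbar j⟫ - ⟪w, zbar i⟫ * ⟪zbar i, zbar j⟫|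
        ≤ |⟪w, zbar j⟫| + |⟪w, zbar i⟫| * |⟪zbar i, zbar j⟫| := by
          rw [← abs_mul]; exact abs_sub _ _
      _ < γ + γ * 1 := by
          have h1 : |⟪w, zbar i⟫| * |⟪zbar i, zbar j⟫| < γ * 1 := by
            rcases eq_or_lt_of_le (abs_nonneg ⟪w, zbar i⟫) with h | h
            · rw [← h]; simpa using hγ
            · calc |⟪w, zbar i⟫| * |⟪zbar i, zbar j⟫| < |⟪w, zbar i⟫| * 1 := by
                    exact mul_lt_mul_of_pos_left hc h
                _ ≤ γ * 1 := by linarith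
          linarith
      _ = 2 * γ := by ring
  linarith
end

section
/- Let z_1,…,z_n ∈ ℝ^d be nonzero vectors, z̄_j = z_j/‖z_j‖₂, let γ > 0, and fix an index i. If w ∈ W_i, then for every j ≠ i one has 1{⟨w, z_j⟩ ≥ 0} = 1{⟨w − ⟨w, z̄_i⟩ z̄_i, z_j⟩ ≥ 0}; consequently, for any coefficients a_1,…,a_n ∈ ℝ, h(w) = a_i · 1{⟨w, z̄_i⟩ ≥ 0} · z_i + Σ_{j ≠ i} a_j · 1{⟨w − ⟨w, z̄_i⟩ z̄_i, z_j⟩ ≥ 0} · z_j. -/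
open RealInnerProductSpace

/-- `h(w) = Σ_j a_j · 1{⟨w, z_j⟩ ≥ 0} · z_j`, the ReLU-gradient sum. -/
noncomputable def reluSum {d n : ℕ} (a : Fin n → ℝ) (z : Fin n → EuclideanSpace ℝ (Fin d))
    (w : EuclideanSpace ℝ (Fin d)) : EuclideanSpace ℝ (Fin d) :=
  ∑ j, (a j * if 0 ≤ ⟪w, z j⟫ then 1 else 0) • z j

/-- For nonzero `z_1, …, z_n`, `z̄_j = z_j / ‖z_j‖`, `γ > 0` and `w ∈ W_i`: the ReLU
activation pattern of `w` on `z_j` (`j ≠ i`) agrees with that of the orthogonal component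
`w − ⟨w, z̄_i⟩ z̄_i`, and consequently
`h(w) = a_i · 1{⟨w, z̄_i⟩ ≥ 0} · z_i + Σ_{j ≠ i} a_j · 1{⟨w − ⟨w, z̄_i⟩ z̄_i, z_j⟩ ≥ 0} · z_j`. -/
theorem reluSum_decomposition {d n : ℕ} (z : Fin n → EuclideanSpace ℝ (Fin d))
    (hz : ∀ j, z j ≠ 0)
    (zbar : Fin n → EuclideanSpace ℝ (Fin d)) (hzbar : ∀ j, zbar j = ‖z j‖⁻¹ • z j)
    (γ : ℝ) (hγ : 0 < γ) (i : Fin n) (w : EuclideanSpace ℝ (Fin d))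
    (hw : w ∈ sepSet zbar γ i) :
    (∀ j, j ≠ i →
        (if 0 ≤ ⟪w, z j⟫ then (1 : ℝ) else 0)
          = if 0 ≤ ⟪w - ⟪w, zbar i⟫ • zbar i, z j⟫ then 1 else 0) ∧
      ∀ a : Fin n → ℝ,
        reluSum a z w
          = (a i * if 0 ≤ ⟪w, zbar i⟫ then 1 else 0) • z i
            + ∑ j ∈ Finset.univ.erase i,
                (a j * if 0 ≤ ⟪w - ⟪w, zbar i⟫ • zbar i, z j⟫ then 1 else 0) • z j := by
  obtain ⟨hw1, hw2⟩ := hw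
  set w' := w - ⟪w, zbar i⟫ • zbar i with hw'
  have hnorm : ∀ j, ‖zbar j‖ = 1 := by
    intro j
    rw [hzbar j, norm_smul, norm_inv, norm_norm,
      inv_mul_cancel₀ (norm_ne_zero_iff.2 (hz j))]
  -- scaling: sign of inner with z j matches sign of inner with zbar j
  have hscale : ∀ (v : EuclideanSpace ℝ (Fin d)) (j : Fin n),
      (0 ≤ ⟪v, z j⟫ ↔ 0 ≤ ⟪v, zbar j⟫) := by
    intro v j
    rw [hzbar j, real_inner_smul_right]
    constructor
    · intro h
      exact mul_nonneg (inv_nonneg.2 (norm_nonneg _)) h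
    · intro h
      have hp : (0:ℝ) < ‖z j‖⁻¹ := inv_pos.2 (norm_pos_iff.2 (hz j))
      nlinarith
  have key : ∀ j, j ≠ i → (0 ≤ ⟪w, z j⟫ ↔ 0 ≤ ⟪w', z j⟫) := by
    intro j hj
    rw [hscale w j, hscale w' j]
    have hdiff : ⟪w, zbar j⟫ - ⟪w', zbar j⟫ = ⟪w, zbar i⟫ * ⟪zbar i, zbar j⟫ := by
      rw [hw']
      rw [inner_sub_left, real_inner_smul_left]
      ring
    have hCS : |⟪zbar i, zbar j⟫| ≤ 1 := by
      have := abs_real_inner_le_norm (zbar i) (zbar j)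
      rwa [hnorm i, hnorm j, one_mul] at this
    have hbound : |⟪w, zbar j⟫ - ⟪w', zbar j⟫| ≤ γ := by
      rw [hdiff, abs_mul]
      calc |⟪w, zbar i⟫| * |⟪zbar i, zbar j⟫| ≤ γ * 1 :=
            mul_le_mul hw1 hCS (abs_nonneg _) (le_of_lt hγ)
        _ = γ := mul_one γ
      
    have hbig := hw2 j hj
    rw [abs_sub_le_iff] at hbound
    rw [le_abs] at hbig
    rcases hbig with h | h
    · constructor <;> intro _ <;> linarith
    · constructor <;> intro h' <;> linarith
  constructor
  · intro j hj
    simp only [key j hj]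
  · intro a
    rw [reluSum, ← Finset.add_sum_erase _ _ (Finset.mem_univ i)]
    congr 1
    · congr 2
      simp only [hscale w i]
    · apply Finset.sum_congr rfl
      intro j hj
      have hj' : j ≠ i := Finset.ne_of_mem_erase hj
      simp only [key j hj']
end

section
/- Let z_1,…,z_n ∈ ℝ^d with ‖z_j‖₂ > 0 for all j and ‖z_i‖₂ ≥ 1/2 for a fixed index i, let z̄_j = z_j/‖z_j‖₂, let γ > 0, and let a_1,…,a_n ∈ ℝ. Suppose w₁, w₂ ∈ W_i have the same orthogonal component, i.e., w₁ − ⟨w₁, z̄_i⟩ z̄_i = w₂ − ⟨w₂, z̄_i⟩ z̄_i, with ⟨w₁, z̄_i⟩ ≥ 0 and ⟨w₂, z̄_i⟩ < 0. Then h(w₁) − h(w₂) = a_i z_i, and hence ‖h(w₁) − h(w₂)‖₂ ≥ |a_i|/2. -/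
open RealInnerProductSpace

/-- If `w₁, w₂ ∈ W_i` have the same orthogonal component with `⟨w₁, z̄_i⟩ ≥ 0` and
`⟨w₂, z̄_i⟩ < 0`, then `h(w₁) − h(w₂) = a_i z_i`, hence `‖h(w₁) − h(w₂)‖ ≥ |a_i|/2`. -/
theorem reluSum_sub_eq {d n : ℕ} (z : Fin n → EuclideanSpace ℝ (Fin d))
    (hz : ∀ j, 0 < ‖z j‖) (i : Fin n) (hzi : 1 / 2 ≤ ‖z i‖)
    (zbar : Fin n → EuclideanSpace ℝ (Fin d)) (hzbar : ∀ j, zbar j = ‖z j‖⁻¹ • z j)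
    (γ : ℝ) (hγ : 0 < γ) (a : Fin n → ℝ)
    (w₁ w₂ : EuclideanSpace ℝ (Fin d))
    (hw₁ : w₁ ∈ sepSet zbar γ i) (hw₂ : w₂ ∈ sepSet zbar γ i)
    (horth : w₁ - ⟪w₁, zbar i⟫ • zbar i = w₂ - ⟪w₂, zbar i⟫ • zbar i)
    (hpos : 0 ≤ ⟪w₁, zbar i⟫) (hneg : ⟪w₂, zbar i⟫ < 0) :
    reluSum a z w₁ - reluSum a z w₂ = a i • z i ∧
      |a i| / 2 ≤ ‖reluSum a z w₁ - reluSum a z w₂‖ := by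
  obtain ⟨h1γ, h1sep⟩ := hw₁
  obtain ⟨h2γ, h2sep⟩ := hw₂
  -- unit norms of zbar
  have hnorm : ∀ j, ‖zbar j‖ = 1 := by
    intro j
    rw [hzbar j, norm_smul, norm_inv, norm_norm, inv_mul_cancel₀ (hz j).ne']
  -- relate inner products with z and zbar
  have hinner : ∀ (w : EuclideanSpace ℝ (Fin d)) j, ⟪w, zbar j⟫ = ‖z j‖⁻¹ * ⟪w, z j⟫ := by
    intro w j
    rw [hzbar j, real_inner_smul_right]
  have hsign : ∀ (w : EuclideanSpace ℝ (Fin d)) j, (0 ≤ ⟪w, z j⟫ ↔ 0 ≤ ⟪w, zbar j⟫) := by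
    intro w j
    rw [hinner]
    constructor
    · intro h; positivity
    · intro h
      by_contra hc
      push_neg at hc
      nlinarith [inv_pos.mpr (hz j)]
  -- indicators agree for j ≠ i
  have hind : ∀ j, j ≠ i → (0 ≤ ⟪w₁, z j⟫ ↔ 0 ≤ ⟪w₂, z j⟫) := by
    intro j hj
    have gen : ∀ w : EuclideanSpace ℝ (Fin d), |⟪w, zbar i⟫| ≤ γ →
        2 * γ ≤ |⟪w - ⟪w, zbar i⟫ • zbar i, zbar j⟫| →
        (0 ≤ ⟪w, zbar j⟫ ↔ 0 ≤ ⟪w - ⟪w, zbar i⟫ • zbar i, zbar j⟫) := by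
      intro w hwγ hwsep
      set t := ⟪w, zbar i⟫ with ht
      set s := ⟪w - t • zbar i, zbar j⟫ with hs
      have hexp : ⟪w, zbar j⟫ = s + t * ⟪zbar i, zbar j⟫ := by
        rw [hs, inner_sub_left, real_inner_smul_left]; ring
      have hcs : |⟪zbar i, zbar j⟫| ≤ 1 := by
        calc |⟪zbar i, zbar j⟫| ≤ ‖zbar i‖ * ‖zbar j‖ := abs_real_inner_le_norm _ _
        _ = 1 := by rw [hnorm, hnorm]; ring
      have habs : |t * ⟪zbar i, zbar j⟫| ≤ γ := by
        rw [abs_mul]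
        calc |t| * |⟪zbar i, zbar j⟫| ≤ γ * 1 :=
          mul_le_mul hwγ hcs (abs_nonneg _) hγ.le
        _ = γ := mul_one γ
      rcases abs_cases s with ⟨he, _⟩ | ⟨he, _⟩
      · -- s ≥ 2γ
        rw [he] at hwsep
        have h1 : 0 ≤ ⟪w, zbar j⟫ := by
          rw [hexp]
          have := abs_le.mp habs
          linarith
        exact iff_of_true h1 (by linarith)
      · -- s ≤ -2γ
        rw [he] at hwsep
        have h1 : ¬ (0 ≤ ⟪w, zbar j⟫) := by
          rw [hexp]
          have := abs_le.mp habs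
          push_neg
          linarith
        exact iff_of_false h1 (by push_neg; linarith)
    have g1 := gen w₁ h1γ (h1sep j hj)
    have g2 := gen w₂ h2γ (h2sep j hj)
    rw [horth] at g1
    rw [hsign w₁ j, hsign w₂ j, g1, g2]
  -- inner products at index i
  have hpos' : 0 ≤ ⟪w₁, z i⟫ := by
    rw [hsign]; exact hpos
  have hneg' : ¬ (0 ≤ ⟪w₂, z i⟫) := by
    rw [hsign]; exact not_le.mpr hneg
  have key : reluSum a z w₁ - reluSum a z w₂ = a i • z i := by
    unfold reluSum
    rw [← Finset.sum_sub_distrib]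
    have hterm : ∀ j ∈ Finset.univ,
        ((a j * if 0 ≤ ⟪w₁, z j⟫ then (1:ℝ) else 0) • z j
          - (a j * if 0 ≤ ⟪w₂, z j⟫ then (1:ℝ) else 0) • z j)
        = if j = i then a i • z i else 0 := by
      intro j _
      by_cases hj : j = i
      · subst hj
        rw [if_pos rfl, if_pos hpos', if_neg hneg']
        simp
      · rw [if_neg hj, if_congr (hind j hj) rfl rfl, sub_self]
    rw [Finset.sum_congr rfl hterm, Finset.sum_ite_eq' Finset.univ i,
      if_pos (Finset.mem_univ i)]
  refine ⟨key, ?_⟩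
  rw [key, norm_smul, Real.norm_eq_abs]
  calc |a i| / 2 = |a i| * (1 / 2) := by ring
  _ ≤ |a i| * ‖z i‖ := mul_le_mul_of_nonneg_left hzi (abs_nonneg _)
end

section
/- Let η > 0 and c > 0, and let a : ℕ → ℝ and g : ℕ → ℝ be sequences with a(t) ≥ 0 and g(t) ≥ 0 for all t, satisfying a(t+1) ≤ a(t) − (η/2)·g(t)² and g(t)² ≥ c·a(t) for all t. Then for every T, Σ_{s=0}^{T−1} η·g(s) ≤ 4·√(a(0)/c). -/
/-- Abstract path-length bound: if `a(t+1) ≤ a(t) − (η/2) g(t)²`, `g(t)² ≥ c·a(t)`,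
`a(t) ≥ 0`, `g(t) ≥ 0` and `η, c > 0`, then `Σ_{s<T} η·g(s) ≤ 4·√(a(0)/c)`. -/
theorem path_length_bound (η c : ℝ) (hη : 0 < η) (hc : 0 < c)
    (a g : ℕ → ℝ) (ha : ∀ t, 0 ≤ a t) (hg : ∀ t, 0 ≤ g t)
    (hdec : ∀ t, a (t + 1) ≤ a t - η / 2 * g t ^ 2)
    (hpl : ∀ t, c * a t ≤ g t ^ 2) :
    ∀ T : ℕ, ∑ s ∈ Finset.range T, η * g s ≤ 4 * Real.sqrt (a 0 / c) := by
  have hsc : 0 < Real.sqrt c := Real.sqrt_pos.mpr hc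
  have step : ∀ t, η * g t ≤ 4 / Real.sqrt c * (Real.sqrt (a t) - Real.sqrt (a (t + 1))) := by
    intro t
    rcases eq_or_lt_of_le (ha t) with h0 | h0
    · -- a t = 0, then g t = 0 and a (t+1) = 0
      have hg2 : g t ^ 2 ≤ 0 := by nlinarith [hdec t, ha (t + 1)]
      have hgz : g t = 0 := by nlinarith [hg t]
      have ha1 : a (t + 1) = 0 := le_antisymm (by nlinarith [hdec t]) (ha (t + 1))
      rw [hgz, ha1, ← h0]
      simp
    · -- a t > 0
      set s := Real.sqrt (a t) with hs
      set s' := Real.sqrt (a (t + 1)) with hs'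
      have hspos : 0 < s := Real.sqrt_pos.mpr h0
      have hs2 : s ^ 2 = a t := Real.sq_sqrt (ha t)
      have hs'2 : s' ^ 2 = a (t + 1) := Real.sq_sqrt (ha (t + 1))
      have hs'nn : 0 ≤ s' := Real.sqrt_nonneg _
      have hs'le : s' ≤ s := Real.sqrt_le_sqrt (by nlinarith [hdec t, hg t])
      -- s - s' ≥ η g²/(4 s)
      have h1 : η * g t ^ 2 / (4 * s) ≤ s - s' := by
        rw [div_le_iff₀ (by positivity)]
        nlinarith [hdec t]
      -- g ≥ √c · s
      have h2 : Real.sqrt c * s ≤ g t := by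
        have : (Real.sqrt c * s) ^ 2 ≤ g t ^ 2 := by
          rw [mul_pow]; rw [Real.sq_sqrt hc.le, hs2]; exact hpl t
        nlinarith [hg t, mul_pos hsc hspos]
      have hgpos : 0 < g t := lt_of_lt_of_le (mul_pos hsc hspos) h2
      -- η g ≤ η g² / (√c s)
      have h3 : η * g t ≤ η * g t ^ 2 / (Real.sqrt c * s) := by
        rw [le_div_iff₀ (mul_pos hsc hspos)]
        nlinarith [mul_pos hη hgpos]
      calc η * g t ≤ η * g t ^ 2 / (Real.sqrt c * s) := h3
        _ = 4 / Real.sqrt c * (η * g t ^ 2 / (4 * s)) := by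
            field_simp
        _ ≤ 4 / Real.sqrt c * (s - s') := by
            apply mul_le_mul_of_nonneg_left h1 (by positivity)
  intro T
  calc ∑ s ∈ Finset.range T, η * g s
      ≤ ∑ s ∈ Finset.range T, 4 / Real.sqrt c * (Real.sqrt (a s) - Real.sqrt (a (s + 1))) :=
        Finset.sum_le_sum fun s _ => step s
    _ = 4 / Real.sqrt c * (Real.sqrt (a 0) - Real.sqrt (a T)) := by
        rw [← Finset.mul_sum, Finset.sum_range_sub' (fun i => Real.sqrt (a i))]
    _ ≤ 4 / Real.sqrt c * Real.sqrt (a 0) := by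
        apply mul_le_mul_of_nonneg_left _ (by positivity)
        linarith [Real.sqrt_nonneg (a T)]
    _ = 4 * Real.sqrt (a 0 / c) := by
        rw [Real.sqrt_div (ha 0)]; ring
end
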